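/- arXiv:2104.14967 — 6 statements merged into one kernel-verified Lean document; each statement's English description precedes it below -/
import Mathlib

section
/- If G is a finite non-abelian group, then |G| is an eigenvalue of the Laplacian matrix of the commuting graph C_G with multiplicity at least |Z(G)|, where Z(G) is the center of G. -/
open Finset Matrix SimpleGraph

/-- If `x` sums to zero and is in the kernel of the complement Laplacian,
then `x` is an eigenvector of the Laplacian with eigenvalue `n`. -/
lemma lap_eigen_aux {V : Type*} [Fintype V] [DecidableEq V] (G : SimpleGraph V)
    [DecidableRel G.Adj] (x : V → ℝ) (hsum : ∑ i, x i = 0)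
    (hker : Gᶜ.lapMatrix ℝ *ᵥ x = 0) :
    G.lapMatrix ℝ *ᵥ x = (Fintype.card V : ℝ) • x := by
  funext i
  have h1 : (G.lapMatrix ℝ *ᵥ x) i = G.degree i * x i - ∑ u ∈ G.neighborFinset i, x u :=
    lapMatrix_mulVec_apply G i x
  have h2 : (Gᶜ.lapMatrix ℝ *ᵥ x) i = Gᶜ.degree i * x i - ∑ u ∈ Gᶜ.neighborFinset i, x u :=
    lapMatrix_mulVec_apply Gᶜ i x
  rw [hker] at h2
  have hdeg : (Gᶜ.degree i : ℝ) = (Fintype.card V : ℝ) - 1 - G.degree i := by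
    rw [degree_compl]
    have h := G.degree_lt_card_verts i
    push_cast [Nat.cast_sub (by omega : G.degree i ≤ Fintype.card V - 1),
      Nat.cast_sub (by omega : 1 ≤ Fintype.card V)]
    ring
  have hNc : Gᶜ.neighborFinset i = (G.neighborFinset i)ᶜ \ {i} := neighborFinset_compl G i
  have hsub : {i} ⊆ (G.neighborFinset i)ᶜ := by
    simp [Finset.singleton_subset_iff]
  have hs2 : ∑ u ∈ Gᶜ.neighborFinset i, x u
      = ∑ u ∈ (G.neighborFinset i)ᶜ, x u - x i := by
    rw [hNc, Finset.sum_sdiff_eq_sub hsub, Finset.sum_singleton]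
  have hs3 : ∑ u ∈ G.neighborFinset i, x u + ∑ u ∈ (G.neighborFinset i)ᶜ, x u = 0 := by
    rw [Finset.sum_add_sum_compl, hsum]
  rw [h1]
  simp only [Pi.zero_apply] at h2
  rw [hs2, hdeg] at h2
  have : ∑ u ∈ G.neighborFinset i, x u = -(∑ u ∈ (G.neighborFinset i)ᶜ, x u) := by linarith
  rw [this, Pi.smul_apply, smul_eq_mul]
  nlinarith [h2, hs3]

/-- The commuting graph of a group: distinct vertices are adjacent iff they commute. -/
def commGraph (G : Type*) [Group G] : SimpleGraph G where
  Adj u v := u ≠ v ∧ u * v = v * u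
  symm := ⟨fun _ _ h => ⟨h.1.symm, h.2.symm⟩⟩
  loopless := ⟨fun _ h => h.1 rfl⟩

instance {G : Type*} [Group G] [DecidableEq G] : DecidableRel (commGraph G).Adj :=
  fun _ _ => instDecidableAnd

/-- The Laplacian matrix of the commuting graph. -/
noncomputable def commLap (G : Type*) [Group G] [Fintype G] [DecidableEq G] :
    Matrix G G ℝ :=
  SimpleGraph.lapMatrix ℝ (commGraph G)

/-- Multiplicity of `μ` as an eigenvalue of the Laplacian of the commuting graph. -/
noncomputable def lapMult (G : Type*) [Group G] [Fintype G] [DecidableEq G] (μ : ℝ) : ℕ :=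
  Module.finrank ℝ (LinearMap.ker (Matrix.toLin' (commLap G - μ • 1)))

/-- Centralizer of an element, as a set. -/
def centSet {G : Type*} [Group G] (u : G) : Set G := {x | x * u = u * x}

/-- Edge boundary of a set in the commuting graph. -/
def edgeBoundary (G : Type*) [Group G] (S : Set G) : Set (Sym2 G) :=
  {e | e ∈ (commGraph G).edgeSet ∧ ∃ u ∈ S, ∃ v ∈ Sᶜ, e = s(u, v)}

/-- For a finite non-abelian group `G`, `|G|` is an eigenvalue of the Laplacian of the
commuting graph with multiplicity at least `|Z(G)|`. -/
theorem card_eigenvalue_mult_ge_card_center (G : Type*) [Group G] [Fintype G]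
    [DecidableEq G] (hna : ¬ ∀ a b : G, a * b = b * a) :
    Nat.card (Subgroup.center G) ≤ lapMult G (Fintype.card G) := by
  classical
  push_neg at hna
  obtain ⟨a, b, hab⟩ := hna
  set H := (commGraph G)ᶜ with hHdef
  have haZ : a ∉ Subgroup.center G := fun h => hab ((Subgroup.mem_center_iff.mp h b).symm)
  -- central vertices are isolated in the complement graph
  have hiso : ∀ z ∈ Subgroup.center G, ∀ j : G, ¬ H.Adj z j := by
    intro z hz j hadj
    rw [hHdef, compl_adj] at hadj
    exact hadj.2 ⟨hadj.1, (Subgroup.mem_center_iff.mp hz j).symm⟩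
  have hreach : ∀ z ∈ Subgroup.center G, ∀ j : G, H.Reachable z j → j = z := by
    intro z hz j ⟨w⟩
    cases w with
    | nil => rfl
    | cons hadj p => exact absurd hadj (hiso z hz _)
  -- the component of `a` in the complement graph
  set K : Finset G := Finset.univ.filter (fun x => H.Reachable a x) with hKdef
  have haK : a ∈ K := Finset.mem_filter.mpr ⟨Finset.mem_univ a, SimpleGraph.Reachable.refl a⟩
  have hk0 : (K.card : ℝ) ≠ 0 := by
    have : 0 < K.card := Finset.card_pos.mpr ⟨a, haK⟩
    positivity
  have hZK : ∀ z ∈ Subgroup.center G, z ∉ K := by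
    intro z hz hzK
    rw [hKdef, Finset.mem_filter] at hzK
    have := hreach z hz a hzK.2.symm
    exact haZ (this ▸ hz)
  -- the eigenvectors
  set v : Subgroup.center G → G → ℝ :=
    fun z x => (if x = (z : G) then 1 else 0) - (if x ∈ K then (K.card : ℝ)⁻¹ else 0)
    with hvdef
  have hvsum : ∀ z, ∑ x, v z x = 0 := by
    intro z
    simp only [hvdef, Finset.sum_sub_distrib]
    rw [Finset.sum_ite_eq' Finset.univ (z : G) (fun _ => (1:ℝ)),
      Finset.sum_ite_mem, Finset.univ_inter, Finset.sum_const]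
    simp [hk0, mul_inv_cancel₀]
  have hvconst : ∀ z, ∀ i j : G, H.Reachable i j → v z i = v z j := by
    intro z i j hr
    have h1 : (i = (z : G)) ↔ (j = (z : G)) := by
      constructor
      · rintro rfl; exact hreach z z.2 j hr
      · rintro rfl; exact hreach z z.2 i hr.symm
    have h2 : (i ∈ K) ↔ (j ∈ K) := by
      simp only [hKdef, Finset.mem_filter, Finset.mem_univ, true_and]
      exact ⟨fun h => h.trans hr, fun h => h.trans hr.symm⟩
    simp only [hvdef]
    rw [if_congr h1 rfl rfl, if_congr h2 rfl rfl]
  have hvker : ∀ z, H.lapMatrix ℝ *ᵥ (v z) = 0 := by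
    intro z
    have := (lapMatrix_mulVec_eq_zero_iff_forall_reachable H (x := v z)).mpr (hvconst z)
    exact this
  -- each `v z` is in the kernel
  have hmem : ∀ z, v z ∈ LinearMap.ker (Matrix.toLin' (commLap G - (Fintype.card G : ℝ) • 1)) := by
    intro z
    rw [LinearMap.mem_ker, Matrix.toLin'_apply, Matrix.sub_mulVec, Matrix.smul_mulVec,
      Matrix.one_mulVec, commLap,
      lap_eigen_aux (commGraph G) (v z) (hvsum z) (hvker z), sub_self]
  -- evaluation at central elements is a Kronecker delta
  have heval : ∀ z z' : Subgroup.center G, v z (z' : G) = if z' = z then 1 else 0 := by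
    intro z z'
    simp only [hvdef]
    rw [if_neg (hZK (z' : G) z'.2), sub_zero]
    by_cases h : z' = z
    · rw [if_pos h, if_pos (congrArg Subtype.val h)]
    · rw [if_neg h, if_neg (fun hc => h (Subtype.ext hc))]
  -- linear independence
  have hli : LinearIndependent ℝ v := by
    rw [Fintype.linearIndependent_iff]
    intro g hg z
    have := congrFun hg (z : G)
    simp only [Finset.sum_apply, Pi.smul_apply, smul_eq_mul, Pi.zero_apply] at this
    rw [Finset.sum_congr rfl (fun z' _ => by rw [heval z' z])] at this
    simpa using this
  set Ker := LinearMap.ker (Matrix.toLin' (commLap G - (Fintype.card G : ℝ) • 1)) with hKer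
  set w : Subgroup.center G → Ker := fun z => ⟨v z, hmem z⟩ with hwdef
  have hliw : LinearIndependent ℝ w :=
    hli.of_comp Ker.subtype
  rw [Nat.card_eq_fintype_card]
  have := hliw.fintype_card_le_finrank
  simpa [lapMult] using this
end

section
/- Let G be a finite non-abelian group and suppose u ∈ G \ Z(G) satisfies: for all v ∈ G \ Z(G), either C(u) = C(v) or C(u) ∩ C(v) = Z(G). Then C(u) is an abelian subgroup of G. -/
/-- If `u ∉ Z(G)` satisfies: for all `v ∉ Z(G)`, `C(u) = C(v)` or `C(u) ∩ C(v) = Z(G)`,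
then `C(u)` is an abelian subgroup of `G`. -/
theorem centralizer_abelian_subgroup (G : Type*) [Group G] [Fintype G]
    (hna : ¬ ∀ a b : G, a * b = b * a) (u : G)
    (hu : u ∉ (Subgroup.center G : Set G))
    (hcond : ∀ v : G, v ∉ (Subgroup.center G : Set G) →
      centSet u = centSet v ∨ centSet u ∩ centSet v = (Subgroup.center G : Set G)) :
    (∃ H : Subgroup G, (H : Set G) = centSet u) ∧
      ∀ x ∈ centSet u, ∀ y ∈ centSet u, x * y = y * x := by
  constructor
  · refine ⟨Subgroup.centralizer {u}, ?_⟩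
    ext x
    simp [centSet, Subgroup.mem_centralizer_iff, eq_comm]
  · intro x hx y hy
    by_cases hxz : x ∈ (Subgroup.center G : Set G)
    · exact (Subgroup.mem_center_iff.mp hxz y).symm
    rcases hcond x hxz with h | h
    · have : y ∈ centSet x := h ▸ hy
      exact this.symm
    · exfalso
      apply hu
      rw [← h]
      exact ⟨rfl, hx.symm⟩
end

section
/- Let G be a finite non-abelian group such that for all u, v ∈ G \ Z(G), either C(u) = C(v) or C(u) ∩ C(v) = Z(G). Then the induced subgraph of the commuting graph C_G on the vertex set G \ Z(G) is disconnected. -/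
/-- If for all `u, v ∉ Z(G)`, `C(u) = C(v)` or `C(u) ∩ C(v) = Z(G)`, then the induced
subgraph of the commuting graph on `G \ Z(G)` is disconnected. -/
theorem induced_subgraph_disconnected (G : Type*) [Group G] [Fintype G]
    (hna : ¬ ∀ a b : G, a * b = b * a)
    (hcond : ∀ u v : G, u ∉ (Subgroup.center G : Set G) →
      v ∉ (Subgroup.center G : Set G) →
      centSet u = centSet v ∨ centSet u ∩ centSet v = (Subgroup.center G : Set G)) :
    ¬ ((commGraph G).induce ((Subgroup.center G : Set G)ᶜ)).Preconnected := by
  intro h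
  push_neg at hna
  obtain ⟨a, b, hab⟩ := hna
  have ha : a ∉ (Subgroup.center G : Set G) := fun h' =>
    hab ((Subgroup.mem_center_iff.mp h' b).symm)
  have hb : b ∉ (Subgroup.center G : Set G) := fun h' =>
    hab (Subgroup.mem_center_iff.mp h' a)
  have key : ∀ x y : (((Subgroup.center G : Set G)ᶜ : Set G)),
      ((commGraph G).induce ((Subgroup.center G : Set G)ᶜ)).Reachable x y →
      centSet (x : G) = centSet (y : G) := by
    intro x y hxy
    obtain ⟨w⟩ := hxy
    induction w with
    | nil => rfl
    | @cons u c v hadj _ ih =>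
      refine Eq.trans ?_ ih
      have hu : (u : G) ∉ (Subgroup.center G : Set G) := u.2
      have hc : (c : G) ∉ (Subgroup.center G : Set G) := c.2
      have hcomm : (u : G) * c = c * u := hadj.2
      rcases hcond u c hu hc with heq | hint
      · exact heq
      · exfalso
        apply hc
        have hm : (c : G) ∈ centSet (u : G) ∩ centSet (c : G) := ⟨hcomm.symm, rfl⟩
        rwa [hint] at hm
  have := key ⟨a, ha⟩ ⟨b, hb⟩ (h ⟨a, ha⟩ ⟨b, hb⟩)
  have : a ∈ centSet b := by rw [← this]; exact rfl
  exact hab this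
end

section
/- If G is a centralizer abelian group (the centralizer of every non-identity element is abelian), then for all u, v ∈ G \ Z(G), either C(u) = C(v) or C(u) ∩ C(v) = Z(G). -/
/-- In a centralizer abelian group (the centralizer of every non-identity element is
abelian), for all `u, v ∉ Z(G)` either `C(u) = C(v)` or `C(u) ∩ C(v) = Z(G)`. -/
theorem centralizer_abelian_implies_condition (G : Type*) [Group G] [Fintype G]
    (hca : ∀ x : G, x ≠ 1 → ∀ a ∈ centSet x, ∀ b ∈ centSet x, a * b = b * a) :
    ∀ u v : G, u ∉ (Subgroup.center G : Set G) → v ∉ (Subgroup.center G : Set G) →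
      centSet u = centSet v ∨ centSet u ∩ centSet v = (Subgroup.center G : Set G) := by
  have ne1 : ∀ u : G, u ∉ (Subgroup.center G : Set G) → u ≠ 1 := by
    intro u hu h
    exact hu (h ▸ (Subgroup.one_mem _))
  have key : ∀ u w : G, u ∉ (Subgroup.center G : Set G) → w ∉ (Subgroup.center G : Set G) →
      w ∈ centSet u → centSet u = centSet w := by
    intro u w hu hw hwu
    have hu1 := ne1 u hu
    have hw1 := ne1 w hw
    have huw : u ∈ centSet w := by
      simpa [centSet] using hwu.symm
    ext x
    constructor
    · intro hx
      exact hca u hu1 x hx w hwu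
    · intro hx
      exact hca w hw1 x hx u huw
  intro u v hu hv
  by_cases h : ∃ w ∈ centSet u ∩ centSet v, w ∉ (Subgroup.center G : Set G)
  · obtain ⟨w, ⟨hwu, hwv⟩, hw⟩ := h
    left
    rw [key u w hu hw hwu, key v w hv hw hwv]
  · right
    push_neg at h
    apply Set.Subset.antisymm
    · exact h
    · intro z hz
      exact ⟨(Subgroup.mem_center_iff.mp hz u).symm, (Subgroup.mem_center_iff.mp hz v).symm⟩
end

section
/- Let G be a finite non-abelian group and S ⊆ G with Z(G) ⊆ S and 0 < |S| ≤ |G|/2. Then the edge boundary of S in the commuting graph C_G satisfies |∂S| ≥ |S|·|Z(G)|. -/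
/-- For a finite non-abelian group and `S ⊆ G` with `Z(G) ⊆ S` and `0 < |S| ≤ |G|/2`, the
edge boundary of `S` in the commuting graph satisfies `|∂S| ≥ |S|·|Z(G)|`. -/
theorem edge_boundary_lower_bound_of_center_subset (G : Type*) [Group G] [Fintype G]
    (hna : ¬ ∀ a b : G, a * b = b * a) (S : Set G)
    (hZS : (Subgroup.center G : Set G) ⊆ S)
    (hpos : 0 < Nat.card S)
    (hhalf : (Nat.card S : ℝ) ≤ (Fintype.card G : ℝ) / 2) :
    Nat.card S * Nat.card (Subgroup.center G) ≤ Nat.card (edgeBoundary G S) := by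

  classical
  -- map (z, v) ∈ Z × Sᶜ to edge s(z,v) in the boundary
  set Z : Set G := (Subgroup.center G : Set G) with hZ
  have hmap : ∀ p : Z × (Sᶜ : Set G), (s((p.1 : G), (p.2 : G)) : Sym2 G) ∈ edgeBoundary G S := by
    rintro ⟨⟨z, hz⟩, ⟨v, hv⟩⟩
    have hzS : z ∈ S := hZS hz
    have hne : z ≠ v := fun h => hv (h ▸ hzS)
    refine ⟨⟨hne, ?_⟩, z, hzS, v, hv, rfl⟩
    exact (Subgroup.mem_center_iff.mp hz v).symm
  let f : Z × (Sᶜ : Set G) → edgeBoundary G S := fun p => ⟨_, hmap p⟩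
  have hinj : Function.Injective f := by
    rintro ⟨⟨z, hz⟩, ⟨v, hv⟩⟩ ⟨⟨z', hz'⟩, ⟨v', hv'⟩⟩ h
    have h' : (s(z, v) : Sym2 G) = s(z', v') := congrArg Subtype.val h
    rcases Sym2.eq_iff.mp h' with ⟨h1, h2⟩ | ⟨h1, h2⟩
    · simp [h1, h2]
    · subst h1; exact absurd (hZS hz) hv'
  have hcard : Nat.card (Z × (Sᶜ : Set G)) ≤ Nat.card (edgeBoundary G S) :=
    Nat.card_le_card_of_injective f hinj
  rw [Nat.card_prod] at hcard
  -- |S| ≤ |Sᶜ|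
  have hsum : Nat.card S + Nat.card (Sᶜ : Set G) = Fintype.card G := by
    simp only [Nat.card_coe_set_eq]
    rw [Set.ncard_add_ncard_compl S, Nat.card_eq_fintype_card]
  have hle : Nat.card S ≤ Nat.card (Sᶜ : Set G) := by
    by_contra hc
    push_neg at hc
    have : (Fintype.card G : ℝ) < 2 * Nat.card S := by
      rw [← hsum]
      push_cast
      have : (Nat.card (Sᶜ : Set G) : ℝ) < Nat.card S := by exact_mod_cast hc
      linarith
    linarith
  calc Nat.card S * Nat.card (Subgroup.center G)
      ≤ Nat.card (Sᶜ : Set G) * Nat.card Z := by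
        exact Nat.mul_le_mul hle (le_of_eq rfl)
    _ = Nat.card Z * Nat.card (Sᶜ : Set G) := Nat.mul_comm _ _
    _ ≤ Nat.card (edgeBoundary G S) := hcard
end

section
/- Let G be a finite non-abelian group with trivial center such that for all non-identity u, v ∈ G, either C(u) = C(v) or C(u) ∩ C(v) = {e}. Then the isoperimetric number of the commuting graph C_G equals 1. -/
section aux
variable {G : Type*} [Group G]

lemma key_cent (hcond : ∀ u v : G, u ≠ 1 → v ≠ 1 →
      centSet u = centSet v ∨ centSet u ∩ centSet v = {(1 : G)})
    {u s : G} (hu : u ≠ 1) (hs : s ≠ 1) (hsu : s ∈ centSet u) : centSet s = centSet u := by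
  rcases hcond s u hs hu with h | h
  · exact h
  · exfalso
    have : u ∈ centSet s ∩ centSet u := ⟨hsu.symm, rfl⟩
    rw [h] at this
    exact hu this

lemma mem_edgeBoundary' {S : Set G} {a b : G} (hadj : a ≠ b ∧ a * b = b * a)
    (ha : a ∈ S) (hb : b ∉ S) : s(a, b) ∈ edgeBoundary G S :=
  ⟨hadj, a, ha, b, hb, rfl⟩

lemma two_mul_le_of_dvd {d n : ℕ} (hd : d ∣ n) (hlt : d < n) : 2 * d ≤ n := by
  obtain ⟨k, rfl⟩ := hd
  have hk : 2 ≤ k := by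
    rcases Nat.lt_or_ge k 2 with h | h
    · interval_cases k <;> omega
    · exact h
  calc 2 * d = d * 2 := by ring
    _ ≤ d * k := Nat.mul_le_mul_left d hk

end aux

/-- For a finite non-abelian group with trivial center in which any two non-identity
elements `u, v` satisfy `C(u) = C(v)` or `C(u) ∩ C(v) = {1}`, the isoperimetric number of
the commuting graph equals 1. -/
theorem isoperimetric_number_trivial_center (G : Type*) [Group G] [Fintype G]
    (hna : ¬ ∀ a b : G, a * b = b * a)
    (hZ : Subgroup.center G = ⊥)
    (hcond : ∀ u v : G, u ≠ 1 → v ≠ 1 →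
      centSet u = centSet v ∨ centSet u ∩ centSet v = {(1 : G)}) :
    IsLeast
      {r : ℝ | ∃ S : Set G, 0 < Nat.card S ∧
        (Nat.card S : ℝ) ≤ (Fintype.card G : ℝ) / 2 ∧
        r = (Nat.card (edgeBoundary G S) : ℝ) / Nat.card S}
      1 := by
  have hGpos : 0 < Fintype.card G := Fintype.card_pos
  constructor
  · -- 1 is achieved by S = C(a) \ {1}
    push_neg at hna
    obtain ⟨a, b, hab⟩ := hna
    have ha1 : a ≠ 1 := by rintro rfl; exact hab (by simp)
    have hbcent : b ∉ centSet a := fun h => hab h.symm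
    set S : Set G := centSet a \ {1} with hS
    have haS : a ∈ S := ⟨rfl, ha1⟩
    have hScard : Nat.card S = S.ncard := Nat.card_coe_set_eq S
    have hSpos : 0 < S.ncard := (Set.ncard_pos S.toFinite).mpr ⟨a, haS⟩
    -- centralizer subgroup
    have hcent_eq : centSet a = ↑(Subgroup.centralizer ({a} : Set G)) := by
      ext x
      simp [centSet, Subgroup.mem_centralizer_iff, eq_comm]
    have hdvd : (centSet a).ncard ∣ Fintype.card G := by
      rw [hcent_eq]
      rw [← Nat.card_coe_set_eq, ← Nat.card_eq_fintype_card]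
      exact Subgroup.card_subgroup_dvd_card _
    have hlt : (centSet a).ncard < Fintype.card G := by
      have : (centSet a) ⊂ Set.univ := by
        refine Set.ssubset_univ_iff.mpr ?_
        intro h
        exact hbcent (h ▸ Set.mem_univ b)
      have := Set.ncard_lt_ncard this Set.finite_univ
      rwa [Set.ncard_univ, Nat.card_eq_fintype_card] at this
    have h2c : 2 * (centSet a).ncard ≤ Fintype.card G := two_mul_le_of_dvd hdvd hlt
    have hSlt : S.ncard < (centSet a).ncard := by
      refine Set.ncard_lt_ncard ?_ (centSet a).toFinite
      constructor
      · exact Set.diff_subset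
      · intro h
        exact (h (show (1 : G) ∈ centSet a by simp [centSet])).2 rfl
    -- the boundary is exactly the edges to 1
    have hbdry : edgeBoundary G S = (fun x => s(x, (1 : G))) '' S := by
      ext e
      constructor
      · rintro ⟨he, u, hu, v, hv, rfl⟩
        rw [SimpleGraph.mem_edgeSet] at he
        obtain ⟨hune, hcomm⟩ := he
        have hu1 : u ≠ 1 := hu.2
        have hcuca : centSet u = centSet a := key_cent hcond ha1 hu1 hu.1
        have hv1 : v = 1 := by
          by_contra hv1
          have : v ∈ centSet u := hcomm.symm
          rw [hcuca] at this
          exact hv ⟨this, hv1⟩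
        exact ⟨u, hu, by rw [hv1]⟩
      · rintro ⟨x, hx, rfl⟩
        refine mem_edgeBoundary' ⟨hx.2, by group⟩ hx ?_
        intro h
        exact h.2 rfl
    have hbdry_card : (edgeBoundary G S).ncard = S.ncard := by
      rw [hbdry]
      refine Set.ncard_image_of_injOn ?_
      intro x hx y hy hxy
      rw [Sym2.eq_iff] at hxy
      rcases hxy with ⟨h, _⟩ | ⟨h1, h2⟩
      · exact h
      · exact absurd h1 hx.2
    refine ⟨S, ?_, ?_, ?_⟩
    · rw [hScard]; exact hSpos
    · rw [hScard]
      have : 2 * S.ncard ≤ Fintype.card G := by omega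
      have := (Nat.cast_le (α := ℝ)).mpr this
      push_cast at this
      linarith
    · rw [hScard, Nat.card_coe_set_eq, hbdry_card]
      rw [div_self]
      exact_mod_cast hSpos.ne'
  · -- lower bound
    rintro r ⟨S, hpos, hhalf, rfl⟩
    rw [Nat.card_coe_set_eq] at hpos hhalf ⊢
    rw [Nat.card_coe_set_eq]
    have hSposR : (0 : ℝ) < S.ncard := by exact_mod_cast hpos
    rw [le_div_iff₀ hSposR, one_mul]
    have key : S.ncard ≤ (edgeBoundary G S).ncard := by
      by_cases h1 : (1 : G) ∈ S
      · -- inject Sᶜ via v ↦ s(1, v)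
        have hsub : (fun v => s((1 : G), v)) '' Sᶜ ⊆ edgeBoundary G S := by
          rintro e ⟨v, hv, rfl⟩
          have hv1 : (1 : G) ≠ v := fun h => hv (h ▸ h1)
          exact mem_edgeBoundary' ⟨hv1, by group⟩ h1 hv
        have hinj : (Sᶜ).ncard ≤ (edgeBoundary G S).ncard := by
          have : ((fun v => s((1 : G), v)) '' Sᶜ).ncard = (Sᶜ).ncard := by
            refine Set.ncard_image_of_injOn ?_
            intro x hx y hy hxy
            rw [Sym2.eq_iff] at hxy
            rcases hxy with ⟨_, h⟩ | ⟨h1', h2⟩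
            · exact h
            · exact absurd (h1' ▸ h1) hy
          rw [← this]
          exact Set.ncard_le_ncard hsub (Set.toFinite _)
        have hcompl : S.ncard + (Sᶜ).ncard = Fintype.card G := by
          rw [← Nat.card_eq_fintype_card]
          exact Set.ncard_add_ncard_compl S
        have h2S : 2 * S.ncard ≤ Fintype.card G := by
          have := (mul_le_mul_of_nonneg_left hhalf (by norm_num : (0:ℝ) ≤ 2))
          rw [mul_div_cancel₀] at this
          · exact_mod_cast this
          · norm_num
        omega
      · -- inject S via x ↦ s(x, 1)
        have hsub : (fun x => s(x, (1 : G))) '' S ⊆ edgeBoundary G S := by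
          rintro e ⟨x, hx, rfl⟩
          have hx1 : x ≠ 1 := fun h => h1 (h ▸ hx)
          exact mem_edgeBoundary' ⟨hx1, by group⟩ hx h1
        have : ((fun x => s(x, (1 : G))) '' S).ncard = S.ncard := by
          refine Set.ncard_image_of_injOn ?_
          intro x hx y hy hxy
          rw [Sym2.eq_iff] at hxy
          rcases hxy with ⟨h, _⟩ | ⟨hx1, _⟩
          · exact h
          · exact absurd hx1 (fun h => h1 (h ▸ hx))
        rw [← this]
        exact Set.ncard_le_ncard hsub (Set.toFinite _)
    exact_mod_cast key
end
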